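/- arXiv:1904.09873 — 2 statements merged into one kernel-verified Lean document; each statement's English description precedes it below -/
import Mathlib

section
/- Let χ be a unitary character of A, J a closed subgroup of K contained in the stabilizer K_χ, and μ : J → U(d) a continuous unitary representation. For (k,a) ∈ G define the unitary operator π(k,a) on L²(K, ℂ^d) by π(k,a)(ξ)(h) := χ((h⁻¹k)·a) · ξ(k⁻¹h). Then the closed subspace H_{μ,χ} := {ξ ∈ L²(K, ℂ^d) : ξ(hl) = μ(l)⁻¹(ξ(h)) for all l ∈ J, a.e. h ∈ K} is invariant under π(k,a) for every (k,a) ∈ G, so that π restricts to a unitary representation of G on H_{μ,χ}. -/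
open MeasureTheory

/-- The operator `π(k,a)` on functions `K → ℂ^d`:
`π(k,a)(ξ)(h) := χ((h⁻¹k)·a) · ξ(k⁻¹h)`. -/
noncomputable def piRep {K A : Type} [Group K] [AddCommGroup A]
    (act : K →* Multiplicative (AddAut A)) (χ : A → ℂ) {d : ℕ} (k : K) (a : A)
    (ξ : K → EuclideanSpace ℂ (Fin d)) : K → EuclideanSpace ℂ (Fin d) :=
  fun h => χ (Multiplicative.toAdd (act (h⁻¹ * k)) a) • ξ (k⁻¹ * h)

/-- Let `χ` be a unitary character of `A`, `J ⊆ K_χ` a closed subgroup of `K`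
and `μ` a continuous unitary representation of `J`.  The closed subspace
`H_{μ,χ}` of `L²(K, ℂ^d)` of `μ`-equivariant functions is invariant under every
`π(k,a)`, `(k,a) ∈ G`: if `ξ ∈ H_{μ,χ}` then `π(k,a)ξ ∈ L²(K, ℂ^d)` and
`π(k,a)ξ` again satisfies the equivariance condition. -/
theorem stmt12 {K A : Type} [Group K] [TopologicalSpace K] [IsTopologicalGroup K]
    [CompactSpace K] [T2Space K] [MeasurableSpace K] [BorelSpace K]
    (μK : Measure K) [μK.IsHaarMeasure] [IsProbabilityMeasure μK]
    [AddCommGroup A] [TopologicalSpace A] [IsTopologicalAddGroup A]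
    [LocallyCompactSpace A] [T2Space A]
    (act : K →* Multiplicative (AddAut A)) (hact : Continuous fun p : K × A => Multiplicative.toAdd (act p.1) p.2)
    (χ : A → ℂ) (hχnorm : ∀ a, ‖χ a‖ = 1)
    (hχmul : ∀ a b, χ (a + b) = χ a * χ b) (hχcont : Continuous χ)
    (J : Subgroup K) (hJ : IsClosed (J : Set K))
    (hJχ : ∀ (l : ↥J) (a : A), χ (Multiplicative.toAdd (act (l : K)⁻¹) a) = χ a)
    (d : ℕ) (hd : 0 < d)
    (μ : ↥J →* Matrix.unitaryGroup (Fin d) ℂ) (hμc : Continuous μ)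
    (ξ : K → EuclideanSpace ℂ (Fin d)) (hξ : MemLp ξ 2 μK)
    (hequiv : ∀ l : ↥J, ∀ᵐ h ∂μK,
      ξ (h * (l : K)) =
        Matrix.toEuclideanLin (((μ l)⁻¹ : Matrix.unitaryGroup (Fin d) ℂ) :
          Matrix (Fin d) (Fin d) ℂ) (ξ h)) :
    ∀ (k : K) (a : A),
      MemLp (piRep act χ k a ξ) 2 μK ∧
        ∀ l : ↥J, ∀ᵐ h ∂μK,
          piRep act χ k a ξ (h * (l : K)) =
            Matrix.toEuclideanLin (((μ l)⁻¹ : Matrix.unitaryGroup (Fin d) ℂ) :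
              Matrix (Fin d) (Fin d) ℂ) (piRep act χ k a ξ h) := by
  intro k a
  have hmp : MeasurePreserving (fun h : K => k⁻¹ * h) μK μK :=
    measurePreserving_mul_left μK k⁻¹
  have hc : Continuous fun h : K => χ (Multiplicative.toAdd (act (h⁻¹ * k)) a) := by
    have : Continuous fun h : K => ((h⁻¹ * k : K), a) := by continuity
    exact hχcont.comp (hact.comp this)
  have h1 : MemLp (fun h : K => ξ (k⁻¹ * h)) 2 μK :=
    hξ.comp_measurePreserving hmp
  constructor
  · refine ⟨(hc.aestronglyMeasurable).smul h1.1, ?_⟩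
    have heq : eLpNorm (piRep act χ k a ξ) 2 μK
        = eLpNorm (fun h : K => ξ (k⁻¹ * h)) 2 μK := by
      apply eLpNorm_congr_norm_ae
      filter_upwards with h
      simp [piRep, norm_smul, hχnorm]
    rw [heq]
    exact h1.2
  · intro l
    have hae : ∀ᵐ h ∂μK, ξ (k⁻¹ * h * (l : K)) =
        Matrix.toEuclideanLin (((μ l)⁻¹ : Matrix.unitaryGroup (Fin d) ℂ) :
          Matrix (Fin d) (Fin d) ℂ) (ξ (k⁻¹ * h)) :=
      hmp.quasiMeasurePreserving.tendsto_ae.eventually (hequiv l)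
    filter_upwards [hae] with h hh
    have hχeq : χ (Multiplicative.toAdd (act ((h * (l : K))⁻¹ * k)) a) = χ (Multiplicative.toAdd (act (h⁻¹ * k)) a) := by
      have : (h * (l : K))⁻¹ * k = (l : K)⁻¹ * (h⁻¹ * k) := by group
      rw [this, map_mul]
      exact hJχ l _
    simp only [piRep, hχeq]
    rw [show k⁻¹ * (h * (l : K)) = k⁻¹ * h * (l : K) by group, hh, _root_.map_smul]
end

section
/- Let L be a closed subgroup of K (with normalized Haar measure) and ν : L → U(d) a continuous unitary representation. Let f : K × A → ℂ be continuous with compact support. Let (χ_m)_{m∈ℕ} be a sequence of unitary characters of A converging pointwise on A to a unitary character χ_∞, and assume that L is contained in the stabilizer K_{χ_m} of each χ_m and in K_{χ_∞}. For a unitary character χ fixed by L, let τ_{ν,χ}(f) denote the bounded operator on L²(K, ℂ^d) given by τ_{ν,χ}(f)(φ)(x) := ∫_K ( ∫_L f̂²(xly⁻¹, y·χ) ν(l) dl )(φ(y)) dy. Then lim_{m→∞} ‖τ_{ν,χ_m}(f) − τ_{ν,χ_∞}(f)‖_op = 0, i.e. the operators τ_{ν,χ_m}(f) converge to τ_{ν,χ_∞}(f)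 in operator norm. -/
open MeasureTheory
open scoped ENNReal
set_option maxHeartbeats 40000000
set_option synthInstance.maxHeartbeats 400000

/-- The operator `τ_{ν,χ}(f)` on `L²(K, ℂ^d)`:
`τ_{ν,χ}(f)(φ)(x) := ∫_K (∫_L f̂²(xly⁻¹, y·χ) ν(l) dl)(φ(y)) dy`, where
`f̂²(k, χ')(= ∫_A χ'(a) f(k,a) da)` is the partial Fourier transform and
`(y·χ)(a) = χ(y⁻¹·a)`. -/
noncomputable def tauOp {K A : Type} [Group K] [TopologicalSpace K] [MeasurableSpace K]
    [AddCommGroup A] [MeasurableSpace A] (μK : Measure K) (μA : Measure A)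
    (act : K →* Multiplicative (AddAut A)) (χ : A → ℂ)
    {L : Subgroup K} (μL : Measure ↥L) {d : ℕ}
    (ν : ↥L →* Matrix.unitaryGroup (Fin d) ℂ)
    (f : K × A → ℂ) (φ : K → EuclideanSpace ℂ (Fin d)) :
    K → EuclideanSpace ℂ (Fin d) :=
  fun x => ∫ y : K, ∫ l : ↥L,
    (∫ a : A, χ (Multiplicative.toAdd (act y⁻¹) a) * f (x * (l : K) * y⁻¹, a) ∂μA) •
      Matrix.toEuclideanLin ((ν l : Matrix (Fin d) (Fin d) ℂ)) (φ y) ∂μL ∂μK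

/-- Auxiliary: the `toEuclideanLin` of a unitary matrix is an isometry. -/
lemma norm_toEuclideanLin_unitary {d : ℕ} (U : Matrix.unitaryGroup (Fin d) ℂ)
    (v : EuclideanSpace ℂ (Fin d)) :
    ‖Matrix.toEuclideanLin (U : Matrix (Fin d) (Fin d) ℂ) v‖ = ‖v‖ := by
  set w := Matrix.toEuclideanLin (U : Matrix (Fin d) (Fin d) ℂ) v with hw
  have h1 : (inner ℂ w w : ℂ) = (inner ℂ v v : ℂ) := by
    rw [hw, ← LinearMap.adjoint_inner_right, ← Matrix.toEuclideanLin_conjTranspose_eq_adjoint]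
    have h3 : Matrix.toEuclideanLin (Matrix.conjTranspose (U : Matrix (Fin d) (Fin d) ℂ))
        (Matrix.toEuclideanLin (U : Matrix (Fin d) (Fin d) ℂ) v) = v := by
      simp only [Matrix.toEuclideanLin_apply, Equiv.apply_symm_apply, Matrix.mulVec_mulVec]
      have hU : Matrix.conjTranspose (U : Matrix (Fin d) (Fin d) ℂ) *
          (U : Matrix (Fin d) (Fin d) ℂ) = 1 := by
        simpa [Matrix.star_eq_conjTranspose] using Unitary.star_mul_self_of_mem U.2
      rw [hU]
      simp
    rw [h3]
  have h2 : ‖w‖ ^ 2 = ‖v‖ ^ 2 := by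
    rw [← inner_self_eq_norm_sq (𝕜 := ℂ) w, ← inner_self_eq_norm_sq (𝕜 := ℂ) v, h1]
  nlinarith [norm_nonneg w, norm_nonneg v]

/-- Auxiliary: matrices as continuous linear maps on Euclidean space, as a linear map. -/
noncomputable def matCLM (d : ℕ) :
    Matrix (Fin d) (Fin d) ℂ →ₗ[ℂ] (EuclideanSpace ℂ (Fin d) →L[ℂ] EuclideanSpace ℂ (Fin d)) :=
  (LinearMap.toContinuousLinearMap.toLinearMap).comp Matrix.toEuclideanLin.toLinearMap

@[simp] lemma matCLM_apply (d : ℕ) (M : Matrix (Fin d) (Fin d) ℂ)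
    (v : EuclideanSpace ℂ (Fin d)) : matCLM d M v = Matrix.toEuclideanLin M v := rfl

lemma matCLM_continuous (d : ℕ) : Continuous (matCLM d) :=
  LinearMap.continuous_of_finiteDimensional _

/-- If `f ∈ C_c(K × A)` and `(χ_m)` is a sequence of unitary characters of `A`
converging pointwise to a unitary character `χ_∞`, all fixed by the closed
subgroup `L ⊆ K`, then the operators `τ_{ν,χ_m}(f)` converge to
`τ_{ν,χ_∞}(f)` in the operator norm of `B(L²(K, ℂ^d))`. -/
theorem stmt15 {K A : Type} [Group K] [TopologicalSpace K] [IsTopologicalGroup K]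
    [CompactSpace K] [T2Space K] [MeasurableSpace K] [BorelSpace K]
    (μK : Measure K) [μK.IsHaarMeasure] [IsProbabilityMeasure μK]
    [AddCommGroup A] [TopologicalSpace A] [IsTopologicalAddGroup A]
    [LocallyCompactSpace A] [T2Space A] [MeasurableSpace A] [BorelSpace A]
    (μA : Measure A) [μA.IsAddHaarMeasure]
    (act : K →* Multiplicative (AddAut A)) (hact : Continuous fun p : K × A => Multiplicative.toAdd (act p.1) p.2)
    (L : Subgroup K) (hL : IsClosed (L : Set K))
    (μL : Measure ↥L) [μL.IsHaarMeasure] [IsProbabilityMeasure μL]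
    (d : ℕ) (hd : 0 < d)
    (ν : ↥L →* Matrix.unitaryGroup (Fin d) ℂ) (hν : Continuous ν)
    (f : K × A → ℂ) (hfc : Continuous f) (hfs : HasCompactSupport f)
    (χ : ℕ → A → ℂ) (χinf : A → ℂ)
    (hχnorm : ∀ m a, ‖χ m a‖ = 1)
    (hχmul : ∀ m a b, χ m (a + b) = χ m a * χ m b)
    (hχcont : ∀ m, Continuous (χ m))
    (hχinfnorm : ∀ a, ‖χinf a‖ = 1)
    (hχinfmul : ∀ a b, χinf (a + b) = χinf a * χinf b)
    (hχinfcont : Continuous χinf)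
    (hLχ : ∀ (m : ℕ) (l : ↥L) (a : A), χ m (Multiplicative.toAdd (act (l : K)⁻¹) a) = χ m a)
    (hLχinf : ∀ (l : ↥L) (a : A), χinf (Multiplicative.toAdd (act (l : K)⁻¹) a) = χinf a)
    (hconv : ∀ a : A, Filter.Tendsto (fun m => χ m a) Filter.atTop (nhds (χinf a))) :
    ∀ ε > (0 : ℝ), ∃ M : ℕ, ∀ m ≥ M,
      ∀ φ : K → EuclideanSpace ℂ (Fin d), MemLp φ 2 μK →
        eLpNorm (fun x => tauOp μK μA act (χ m) μL ν f φ x -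
            tauOp μK μA act χinf μL ν f φ x) 2 μK ≤
          ENNReal.ofReal ε * eLpNorm φ 2 μK := by
  intro ε hε
  haveI hLc : CompactSpace ↥L := isCompact_iff_compactSpace.mp hL.isCompact
  haveI hLb : BorelSpace ↥L := Subtype.borelSpace (L : Set K)
  haveI : IsFiniteMeasureOnCompacts μK := ⟨fun _ _ => measure_lt_top μK _⟩
  haveI : IsFiniteMeasureOnCompacts μL := ⟨fun _ _ => measure_lt_top μL _⟩
  -- a bound on f
  obtain ⟨B, hB⟩ := hfs.exists_bound_of_continuous hfc
  have hB0 : 0 ≤ B := le_trans (norm_nonneg _) (hB (1, 0))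
  set S : Set A := Prod.snd '' tsupport f with hSdef
  have hScomp : IsCompact S := hfs.image continuous_snd
  have hSmeas : MeasurableSet S := hScomp.isClosed.measurableSet
  set bound : A → ℝ := S.indicator fun _ => B with hbounddef
  have hbound_nonneg : ∀ a, 0 ≤ bound a := fun a => Set.indicator_nonneg (fun _ _ => hB0) a
  clear_value bound
  have hfS : ∀ (k : K) (a : A), a ∉ S → f (k, a) = 0 := by
    intro k a ha
    by_contra h
    exact ha ⟨(k, a), subset_tsupport f h, rfl⟩
  clear_value S
  have hfbound : ∀ (k : K) (a : A), ‖f (k, a)‖ ≤ bound a := by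
    intro k a
    by_cases ha : a ∈ S
    · simpa [hbounddef, ha] using hB (k, a)
    · simp [hbounddef, Set.indicator_of_notMem ha, hfS k a ha]
  have hbound_int : Integrable bound μA := by
    rw [hbounddef, integrable_indicator_iff hSmeas]
    exact integrableOn_const hScomp.measure_lt_top.ne
  set C : ℝ := ∫ a, bound a ∂μA with hCdef
  have hC0 : 0 ≤ C := integral_nonneg hbound_nonneg
  clear_value C
  -- the partial Fourier kernel
  set ker : (A → ℂ) → K → ↥L → K → ℂ :=
    fun u x l y => ∫ a, u (Multiplicative.toAdd (act y⁻¹) a) * f (x * (l : K) * y⁻¹, a) ∂μA with hkerdef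
  clear_value ker
  have hint_cont : ∀ u : A → ℂ, Continuous u → ∀ (k y : K),
      Continuous fun a => u (Multiplicative.toAdd (act y⁻¹) a) * f (k, a) := by
    intro u hu k y
    exact (hu.comp (hact.comp (continuous_const.prodMk continuous_id))).mul
      (hfc.comp (continuous_const.prodMk continuous_id))
  have hint_bound : ∀ u : A → ℂ, (∀ a, ‖u a‖ = 1) → ∀ (k y : K) (a : A),
      ‖u (Multiplicative.toAdd (act y⁻¹) a) * f (k, a)‖ ≤ bound a := by
    intro u hu k y a
    rw [norm_mul, hu, one_mul]
    exact hfbound k a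
  have hker_norm : ∀ u : A → ℂ, (∀ a, ‖u a‖ = 1) → ∀ (x : K) (l : ↥L) (y : K),
      ‖ker u x l y‖ ≤ C := by
    intro u hu x l y
    simp only [hkerdef]
    rw [hCdef]
    refine le_trans (norm_integral_le_integral_norm _) ?_
    exact integral_mono_of_nonneg (ae_of_all _ fun a => norm_nonneg _) hbound_int
      (ae_of_all _ fun a => hint_bound u hu _ _ a)
  have hker_cont : ∀ u : A → ℂ, Continuous u →
      Continuous fun p : K × ↥L × K => ker u p.1 p.2.1 p.2.2 := by
    intro u hu
    simp only [hkerdef]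
    rw [← continuousOn_univ]
    refine continuousOn_integral_of_compact_support hScomp (Continuous.continuousOn ?_) ?_
    · have h1 : Continuous fun q : (K × ↥L × K) × A => u (Multiplicative.toAdd (act q.1.2.2⁻¹) q.2) :=
        hu.comp (hact.comp
          (((continuous_snd.comp (continuous_snd.comp continuous_fst)).inv).prodMk
            continuous_snd))
      have h2 : Continuous fun q : (K × ↥L × K) × A =>
          f (q.1.1 * (q.1.2.1 : K) * q.1.2.2⁻¹, q.2) :=
        hfc.comp ((((continuous_fst.comp continuous_fst).mul
          (continuous_subtype_val.comp
            (continuous_fst.comp (continuous_snd.comp continuous_fst)))).mul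
          ((continuous_snd.comp (continuous_snd.comp continuous_fst)).inv)).prodMk
          continuous_snd)
      exact h1.mul h2
    · intro p a _ ha
      simp [hfS _ a ha]
  have hker_tendsto : ∀ (x : K) (l : ↥L) (y : K),
      Filter.Tendsto (fun m => ker (χ m) x l y) Filter.atTop (nhds (ker χinf x l y)) := by
    intro x l y
    simp only [hkerdef]
    exact tendsto_integral_of_dominated_convergence bound
      (fun m => (hint_cont (χ m) (hχcont m) _ y).aestronglyMeasurable)
      hbound_int
      (fun m => ae_of_all _ fun a => hint_bound (χ m) (hχnorm m) _ y a)
      (ae_of_all _ fun a => (hconv _).mul_const _)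
  -- the L¹(L) kernel difference
  set g : ℕ → K → K → ℝ :=
    fun m x y => ∫ l : ↥L, ‖ker (χ m) x l y - ker χinf x l y‖ ∂μL with hgdef
  clear_value g
  have hdel_cont : ∀ m, Continuous (fun p : K × ↥L × K =>
      ‖ker (χ m) p.1 p.2.1 p.2.2 - ker χinf p.1 p.2.1 p.2.2‖) := fun m =>
    ((hker_cont (χ m) (hχcont m)).sub (hker_cont χinf hχinfcont)).norm
  have hdel_bound : ∀ m x (l : ↥L) y, ‖ker (χ m) x l y - ker χinf x l y‖ ≤ C + C :=
    fun m x l y => le_trans (norm_sub_le _ _)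
      (add_le_add (hker_norm _ (hχnorm m) x l y) (hker_norm _ hχinfnorm x l y))
  have hg_cont : ∀ m, Continuous fun q : K × K => g m q.1 q.2 := by
    intro m
    simp only [hgdef]
    rw [← continuousOn_univ]
    have hcomp : Continuous fun q : (K × K) × ↥L =>
        ‖ker (χ m) q.1.1 q.2 q.1.2 - ker χinf q.1.1 q.2 q.1.2‖ :=
      (hdel_cont m).comp ((continuous_fst.comp continuous_fst).prodMk
        (continuous_snd.prodMk (continuous_snd.comp continuous_fst)))
    exact continuousOn_integral_of_compact_support isCompact_univ
      hcomp.continuousOn (fun p l _ hl => absurd (Set.mem_univ l) hl)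
  have hg_nonneg : ∀ m x y, 0 ≤ g m x y := by
    intro m x y
    simp only [hgdef]
    exact integral_nonneg fun l => norm_nonneg _
  have hg_le : ∀ m x y, g m x y ≤ C + C := by
    intro m x y
    simp only [hgdef]
    refine le_trans (integral_mono_of_nonneg (ae_of_all _ fun l => norm_nonneg _)
      (integrable_const _) (ae_of_all _ fun l => hdel_bound m x l y)) ?_
    simp
  have hg_tendsto : ∀ x y, Filter.Tendsto (fun m => g m x y) Filter.atTop (nhds 0) := by
    intro x y
    have h := tendsto_integral_of_dominated_convergence (μ := μL)
      (F := fun m (l : ↥L) => ‖ker (χ m) x l y - ker χinf x l y‖)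
      (f := fun _ : ↥L => (0 : ℝ)) (fun _ => C + C)
      (fun m => ((hdel_cont m).comp
        (continuous_const.prodMk (continuous_id.prodMk continuous_const))).aestronglyMeasurable)
      (integrable_const _)
      (fun m => ae_of_all _ fun l => by simpa using hdel_bound m x l y)
      (ae_of_all _ fun l => by
        have h1 : Filter.Tendsto (fun n => ker (χ n) x l y - ker χinf x l y)
            Filter.atTop (nhds 0) := by
          simpa using (hker_tendsto x l y).sub (tendsto_const_nhds (x := ker χinf x l y))
        simpa only [norm_zero] using h1.norm)
    simp only [hgdef]
    simpa using h
  -- the L²(K) kernel difference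
  set H : ℕ → K → ℝ := fun m x => ∫ y, (g m x y) ^ 2 ∂μK with hHdef
  clear_value H
  have hH_cont : ∀ m, Continuous (H m) := by
    intro m
    simp only [hHdef]
    rw [← continuousOn_univ]
    have hcomp : Continuous fun q : K × K => (g m q.1 q.2) ^ 2 := (hg_cont m).pow 2
    exact continuousOn_integral_of_compact_support isCompact_univ
      hcomp.continuousOn (fun p y _ hy => absurd (Set.mem_univ y) hy)
  have hH_nonneg : ∀ m x, 0 ≤ H m x := by
    intro m x
    simp only [hHdef]
    exact integral_nonneg fun y => sq_nonneg _
  have hH_le : ∀ m x, H m x ≤ (C + C) ^ 2 := by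
    intro m x
    simp only [hHdef]
    refine le_trans (integral_mono_of_nonneg (ae_of_all _ fun y => sq_nonneg _)
      (integrable_const _) (ae_of_all _ fun y =>
        pow_le_pow_left₀ (hg_nonneg m x y) (hg_le m x y) 2)) ?_
    simp
  have hH_tendsto : ∀ x, Filter.Tendsto (fun m => H m x) Filter.atTop (nhds 0) := by
    intro x
    have h := tendsto_integral_of_dominated_convergence (μ := μK)
      (F := fun m y => (g m x y) ^ 2) (f := fun _ : K => (0 : ℝ)) (fun _ => (C + C) ^ 2)
      (fun m => (((hg_cont m).comp
        (continuous_const.prodMk continuous_id)).pow 2).aestronglyMeasurable)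
      (integrable_const _)
      (fun m => ae_of_all _ fun y => by
        rw [Real.norm_of_nonneg (by positivity)]
        exact pow_le_pow_left₀ (hg_nonneg m x y) (hg_le m x y) 2)
      (ae_of_all _ fun y => by simpa using (hg_tendsto x y).pow 2)
    simp only [hHdef]
    simpa using h
  set J : ℕ → ℝ := fun m => ∫ x, H m x ∂μK with hJdef
  clear_value J
  have hJ_tendsto : Filter.Tendsto J Filter.atTop (nhds 0) := by
    have h := tendsto_integral_of_dominated_convergence (μ := μK)
      (F := fun m x => H m x) (f := fun _ : K => (0 : ℝ)) (fun _ => (C + C) ^ 2)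
      (fun m => (hH_cont m).aestronglyMeasurable)
      (integrable_const _)
      (fun m => ae_of_all _ fun x => by
        rw [Real.norm_of_nonneg (hH_nonneg m x)]
        exact hH_le m x)
      (ae_of_all _ fun x => hH_tendsto x)
    simp only [hJdef]
    simpa using h
  have hev : ∀ᶠ m in Filter.atTop, J m < ε ^ 2 :=
    hJ_tendsto.eventually (gt_mem_nhds (by positivity))
  obtain ⟨M, hM⟩ := Filter.eventually_atTop.mp hev
  refine ⟨M, fun m hm φ hφ => ?_⟩
  -- replace φ by a strongly measurable representative
  have hφm := hφ.aestronglyMeasurable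
  set ψ : K → EuclideanSpace ℂ (Fin d) := hφm.mk φ with hψdef
  have hψsm : StronglyMeasurable ψ := hφm.stronglyMeasurable_mk
  have hφψ : φ =ᵐ[μK] ψ := hφm.ae_eq_mk
  have hψ2 : MemLp ψ 2 μK := hφ.ae_eq hφψ
  clear_value ψ
  have htau_eq : ∀ u : A → ℂ, tauOp μK μA act u μL ν f φ = tauOp μK μA act u μL ν f ψ := by
    intro u
    funext x
    refine integral_congr_ae ?_
    filter_upwards [hφψ] with y hy
    rw [hy]
  rw [eLpNorm_congr_ae hφψ]
  simp only [htau_eq]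
  haveI : SecondCountableTopology (EuclideanSpace ℂ (Fin d) →L[ℂ] EuclideanSpace ℂ (Fin d)) :=
    inferInstance
  -- integrability of ψ
  have hψ1 : Integrable ψ μK := memLp_one_iff_integrable.mp (hψ2.mono_exponent one_le_two)
  have hψn : Integrable (fun y => ‖ψ y‖) μK := hψ1.norm
  -- the operator kernel
  have hT_cont : Continuous fun l : ↥L => matCLM d ((ν l : Matrix (Fin d) (Fin d) ℂ)) :=
    (matCLM_continuous d).comp (continuous_subtype_val.comp hν)
  have hTnorm1 : ∀ (l : ↥L) (w : EuclideanSpace ℂ (Fin d)),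
      ‖matCLM d ((ν l : Matrix (Fin d) (Fin d) ℂ)) w‖ = ‖w‖ := fun l w =>
    norm_toEuclideanLin_unitary (ν l) w
  have hTle : ∀ l : ↥L, ‖matCLM d ((ν l : Matrix (Fin d) (Fin d) ℂ))‖ ≤ 1 := fun l =>
    ContinuousLinearMap.opNorm_le_bound _ zero_le_one fun w => by rw [hTnorm1 l w, one_mul]
  set N : (A → ℂ) → K → K → (EuclideanSpace ℂ (Fin d) →L[ℂ] EuclideanSpace ℂ (Fin d)) :=
    fun u x y => ∫ l : ↥L, ker u x l y • matCLM d ((ν l : Matrix (Fin d) (Fin d) ℂ)) ∂μL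
    with hNdef
  clear_value N
  have hNint : ∀ u : A → ℂ, Continuous u → ∀ x y,
      Integrable (fun l : ↥L =>
        ker u x l y • matCLM d ((ν l : Matrix (Fin d) (Fin d) ℂ))) μL := by
    intro u huc x y
    refine Continuous.integrable_of_hasCompactSupport ?_ (HasCompactSupport.of_compactSpace _)
    exact (((hker_cont u huc).comp
      (continuous_const.prodMk (continuous_id.prodMk continuous_const)))).smul hT_cont
  have hsmul_le : ∀ u : A → ℂ, (∀ a, ‖u a‖ = 1) → ∀ x (l : ↥L) y,
      ‖ker u x l y • matCLM d ((ν l : Matrix (Fin d) (Fin d) ℂ))‖ ≤ C := by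
    intro u hu1 x l y
    refine le_trans (norm_smul_le (ker u x l y)
      (matCLM d ((ν l : Matrix (Fin d) (Fin d) ℂ)))) ?_
    calc ‖ker u x l y‖ * ‖matCLM d ((ν l : Matrix (Fin d) (Fin d) ℂ))‖
        ≤ C * 1 := mul_le_mul (hker_norm u hu1 x l y) (hTle l) (norm_nonneg _) hC0
      _ = C := mul_one C
  have hNle : ∀ u : A → ℂ, (∀ a, ‖u a‖ = 1) → ∀ x y, ‖N u x y‖ ≤ C := by
    intro u hu1 x y
    simp only [hNdef]
    refine le_trans (norm_integral_le_integral_norm _) ?_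
    refine le_trans (integral_mono_of_nonneg (ae_of_all _ fun l => norm_nonneg _)
      (integrable_const _) (ae_of_all _ fun l => hsmul_le u hu1 x l y)) ?_
    simp
  have hN_cont : ∀ u : A → ℂ, Continuous u → ∀ x,
      Continuous fun y => N u x y := by
    intro u huc x
    simp only [hNdef]
    rw [← continuousOn_univ]
    have hcomp : Continuous fun q : K × ↥L =>
        ker u x q.2 q.1 • matCLM d ((ν q.2 : Matrix (Fin d) (Fin d) ℂ)) :=
      ((hker_cont u huc).comp
        (continuous_const.prodMk (continuous_snd.prodMk continuous_fst))).smul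
        (hT_cont.comp continuous_snd)
    exact continuousOn_integral_of_compact_support isCompact_univ
      hcomp.continuousOn (fun p l _ hl => absurd (Set.mem_univ l) hl)
  have hrepr : ∀ u : A → ℂ, Continuous u → ∀ x,
      tauOp μK μA act u μL ν f ψ x = ∫ y, (N u x y) (ψ y) ∂μK := by
    intro u huc x
    simp only [tauOp]
    refine integral_congr_ae (ae_of_all _ fun y => ?_)
    simp only [hNdef]
    rw [ContinuousLinearMap.integral_apply (hNint u huc x y)]
    refine integral_congr_ae (ae_of_all _ fun l => ?_)
    simp only [hkerdef, ContinuousLinearMap.smul_apply, matCLM_apply]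
  have hInty : ∀ u : A → ℂ, Continuous u → (∀ a, ‖u a‖ = 1) → ∀ x,
      Integrable (fun y => (N u x y) (ψ y)) μK := by
    intro u huc hu1 x
    refine Integrable.mono' (hψn.const_mul C) ?_ (ae_of_all _ fun y => ?_)
    · have hsm : StronglyMeasurable fun y => (N u x y, ψ y) :=
        ((hN_cont u huc x).stronglyMeasurable).prodMk hψsm
      exact (isBoundedBilinearMap_apply.continuous.comp_stronglyMeasurable hsm).aestronglyMeasurable
    · exact le_trans (ContinuousLinearMap.le_opNorm _ _)
        (mul_le_mul_of_nonneg_right (hNle u hu1 x y) (norm_nonneg _))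
  have hNdiff_le : ∀ x y, ‖N (χ m) x y - N χinf x y‖ ≤ g m x y := by
    intro x y
    have hNdiff : N (χ m) x y - N χinf x y =
        ∫ l : ↥L, (ker (χ m) x l y - ker χinf x l y) •
          matCLM d ((ν l : Matrix (Fin d) (Fin d) ℂ)) ∂μL := by
      simp only [hNdef]
      rw [← integral_sub (hNint _ (hχcont m) x y) (hNint _ hχinfcont x y)]
      refine integral_congr_ae (ae_of_all _ fun l => ?_)
      show ker (χ m) x l y • matCLM d ((ν l : Matrix (Fin d) (Fin d) ℂ)) -
          ker χinf x l y • matCLM d ((ν l : Matrix (Fin d) (Fin d) ℂ)) =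
        (ker (χ m) x l y - ker χinf x l y) • matCLM d ((ν l : Matrix (Fin d) (Fin d) ℂ))
      exact (sub_smul (ker (χ m) x l y) (ker χinf x l y)
        (matCLM d ((ν l : Matrix (Fin d) (Fin d) ℂ)))).symm
    calc ‖N (χ m) x y - N χinf x y‖
        = ‖∫ l : ↥L, (ker (χ m) x l y - ker χinf x l y) •
            matCLM d ((ν l : Matrix (Fin d) (Fin d) ℂ)) ∂μL‖ := congrArg norm hNdiff
      _ ≤ ∫ l : ↥L, ‖(ker (χ m) x l y - ker χinf x l y) •
            matCLM d ((ν l : Matrix (Fin d) (Fin d) ℂ))‖ ∂μL :=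
          norm_integral_le_integral_norm _
      _ ≤ ∫ l : ↥L, ‖ker (χ m) x l y - ker χinf x l y‖ ∂μL := by
          refine integral_mono_of_nonneg (ae_of_all _ fun l => norm_nonneg _) ?_
            (ae_of_all _ fun l => ?_)
          · have hc : Continuous fun l : ↥L => ‖ker (χ m) x l y - ker χinf x l y‖ :=
              (hdel_cont m).comp (continuous_const.prodMk (continuous_id.prodMk continuous_const))
            exact hc.integrable_of_hasCompactSupport (HasCompactSupport.of_compactSpace _)
          · show ‖(ker (χ m) x l y - ker χinf x l y) •
                matCLM d ((ν l : Matrix (Fin d) (Fin d) ℂ))‖ ≤ ‖ker (χ m) x l y - ker χinf x l y‖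
            refine le_trans (norm_smul_le (ker (χ m) x l y - ker χinf x l y)
              (matCLM d ((ν l : Matrix (Fin d) (Fin d) ℂ)))) ?_
            refine le_trans (mul_le_mul_of_nonneg_left (hTle l) (norm_nonneg _)) ?_
            rw [mul_one]
      _ = g m x y := by simp only [hgdef]
  -- the L² norm of ψ
  have hψLp : eLpNorm ψ 2 μK =
      ENNReal.ofReal ((∫ y, ‖ψ y‖ ^ (2 : ℝ) ∂μK) ^ (2 : ℝ)⁻¹) := by
    rw [hψ2.eLpNorm_eq_integral_rpow_norm two_ne_zero ENNReal.ofNat_ne_top]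
    norm_num
  set c2 : ℝ := (∫ y, ‖ψ y‖ ^ (2 : ℝ) ∂μK) ^ (2 : ℝ)⁻¹ with hc2def
  have hc2_0 : 0 ≤ c2 := Real.rpow_nonneg (integral_nonneg fun y =>
    Real.rpow_nonneg (norm_nonneg _) _) _
  clear_value c2
  -- Hölder inequality
  have hHolder : ∀ x, ∫ y, g m x y * ‖ψ y‖ ∂μK ≤ Real.sqrt (H m x) * c2 := by
    intro x
    have hpq : Real.HolderConjugate 2 2 := Real.HolderConjugate.two_two
    have h2 : (ENNReal.ofReal (2 : ℝ)) = 2 := by norm_num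
    have hgmem : MemLp (fun y => g m x y) (ENNReal.ofReal (2 : ℝ)) μK := by
      rw [h2]
      refine MemLp.of_bound
        ((hg_cont m).comp (continuous_const.prodMk continuous_id)).aestronglyMeasurable
        (C + C) (ae_of_all _ fun y => ?_)
      show ‖g m x y‖ ≤ C + C
      rw [Real.norm_of_nonneg (hg_nonneg m x y)]
      exact hg_le m x y
    have hψmem : MemLp (fun y => ‖ψ y‖) (ENNReal.ofReal (2 : ℝ)) μK := by
      rw [h2]
      exact hψ2.norm
    have h := integral_mul_le_Lp_mul_Lq_of_nonneg hpq
      (ae_of_all _ fun y => hg_nonneg m x y) (ae_of_all _ fun y => norm_nonneg (ψ y))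
      hgmem hψmem
    refine le_trans h ?_
    have e1 : (∫ y, g m x y ^ (2 : ℝ) ∂μK) = H m x := by
      simp only [hHdef]
      refine integral_congr_ae (ae_of_all _ fun y => ?_)
      show g m x y ^ (2 : ℝ) = g m x y ^ 2
      rw [show (2 : ℝ) = ((2 : ℕ) : ℝ) by norm_num, Real.rpow_natCast]
    rw [e1, ← Real.sqrt_eq_rpow, hc2def, one_div]
  -- the key pointwise bound
  have key : ∀ x, ‖tauOp μK μA act (χ m) μL ν f ψ x - tauOp μK μA act χinf μL ν f ψ x‖ ≤
      Real.sqrt (H m x) * c2 := by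
    intro x
    rw [hrepr _ (hχcont m) x, hrepr _ hχinfcont x,
      ← integral_sub (hInty _ (hχcont m) (hχnorm m) x) (hInty _ hχinfcont hχinfnorm x)]
    refine le_trans (norm_integral_le_integral_norm _) (le_trans ?_ (hHolder x))
    refine integral_mono_of_nonneg (ae_of_all _ fun y => norm_nonneg _) ?_
      (ae_of_all _ fun y => ?_)
    · refine Integrable.bdd_mul (c := C + C) hψn
        (((hg_cont m).comp (continuous_const.prodMk continuous_id)).aestronglyMeasurable)
        (ae_of_all _ fun y => ?_)
      rw [Real.norm_of_nonneg (hg_nonneg m x y)]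
      exact hg_le m x y
    · show ‖N (χ m) x y (ψ y) - N χinf x y (ψ y)‖ ≤ g m x y * ‖ψ y‖
      have heq : N (χ m) x y (ψ y) - N χinf x y (ψ y) = (N (χ m) x y - N χinf x y) (ψ y) := by
        simp
      rw [heq]
      exact le_trans (ContinuousLinearMap.le_opNorm _ _)
        (mul_le_mul_of_nonneg_right (hNdiff_le x y) (norm_nonneg _))
  -- conclude
  have hsqrtmem : MemLp (fun x => Real.sqrt (H m x)) 2 μK := by
    refine MemLp.of_bound (Real.continuous_sqrt.comp (hH_cont m)).aestronglyMeasurable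
      (C + C) (ae_of_all _ fun x => ?_)
    show ‖Real.sqrt (H m x)‖ ≤ C + C
    rw [Real.norm_of_nonneg (Real.sqrt_nonneg _)]
    refine le_trans (Real.sqrt_le_sqrt (hH_le m x)) ?_
    exact le_of_eq (Real.sqrt_sq (by positivity))
  have hsqrt_le : eLpNorm (fun x => Real.sqrt (H m x)) 2 μK ≤ ENNReal.ofReal ε := by
    rw [hsqrtmem.eLpNorm_eq_integral_rpow_norm two_ne_zero ENNReal.ofNat_ne_top]
    have hint_eq : (∫ x, ‖Real.sqrt (H m x)‖ ^ ((2 : ℝ≥0∞).toReal) ∂μK) = J m := by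
      simp only [hJdef]
      refine integral_congr_ae (ae_of_all _ fun x => ?_)
      show ‖Real.sqrt (H m x)‖ ^ ((2 : ℝ≥0∞).toReal) = H m x
      rw [Real.norm_of_nonneg (Real.sqrt_nonneg _)]
      rw [show ((2 : ℝ≥0∞).toReal) = ((2 : ℕ) : ℝ) by norm_num, Real.rpow_natCast,
        Real.sq_sqrt (hH_nonneg m x)]
    rw [hint_eq]
    apply ENNReal.ofReal_le_ofReal
    have hJ0 : 0 ≤ J m := by
      rw [hJdef]
      exact integral_nonneg fun x => hH_nonneg m x
    calc J m ^ ((2 : ℝ≥0∞).toReal)⁻¹ = Real.sqrt (J m) := by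
          rw [Real.sqrt_eq_rpow, one_div]
          norm_num
      _ ≤ Real.sqrt (ε ^ 2) := Real.sqrt_le_sqrt (le_of_lt (hM m hm))
      _ = ε := Real.sqrt_sq hε.le
  calc eLpNorm (fun x => tauOp μK μA act (χ m) μL ν f ψ x -
        tauOp μK μA act χinf μL ν f ψ x) 2 μK
      ≤ eLpNorm (fun x => Real.sqrt (H m x) * c2) 2 μK := by
        refine eLpNorm_mono fun x => ?_
        refine le_trans (key x) ?_
        rw [Real.norm_of_nonneg (mul_nonneg (Real.sqrt_nonneg _) hc2_0)]
    _ = (‖c2‖₊ : ℝ≥0∞) * eLpNorm (fun x => Real.sqrt (H m x)) 2 μK := by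
        rw [show (fun x => Real.sqrt (H m x) * c2) = c2 • fun x => Real.sqrt (H m x) from
          funext fun x => by simp [smul_eq_mul, mul_comm]]
        exact eLpNorm_const_smul c2 _ 2 μK
    _ ≤ (‖c2‖₊ : ℝ≥0∞) * ENNReal.ofReal ε := mul_le_mul_right hsqrt_le _
    _ = ENNReal.ofReal ε * eLpNorm ψ 2 μK := by
        rw [mul_comm]
        congr 1
        rw [hψLp]
        exact Real.enorm_eq_ofReal hc2_0
end
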